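/- arXiv:1606.07524 — 4 statements merged into one kernel-verified Lean document; each statement's English description precedes it below -/
import Mathlib

section
/- Suppose that the set of BI histories of a preference–sight tree (T,s) equals its set of SCBI histories. Then every BI history of (T,s) is sight-reachable. -/
/-- A preference tree: a nonempty finite, prefix-closed set `H` of histories
(finite sequences of actions) containing the empty sequence, together with a
total preorder `pref` (the preference `⪰`) on `H`. -/
structure PrefTree (A : Type) where
  H : Set (List A)
  pref : List A → List A → Prop
  H_finite : H.Finite
  nil_mem : ([] : List A) ∈ H
  prefix_closed : ∀ ⦃h h' : List A⦄, h <+: h' → h' ∈ H → h ∈ H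
  pref_refl : ∀ h ∈ H, pref h h
  pref_trans : ∀ h₁ ∈ H, ∀ h₂ ∈ H, ∀ h₃ ∈ H, pref h₁ h₂ → pref h₂ h₃ → pref h₁ h₃
  pref_total : ∀ h₁ ∈ H, ∀ h₂ ∈ H, pref h₁ h₂ ∨ pref h₂ h₁

/-- A history is terminal if no one-step extension of it lies in `H`. -/
def PrefTree.Terminal {A : Type} (T : PrefTree A) (z : List A) : Prop :=
  z ∈ T.H ∧ ∀ a : A, z ++ [a] ∉ T.H

/-- A BI history: a terminal history weakly preferred to every terminal history. -/
def PrefTree.BIHistory {A : Type} (T : PrefTree A) (z : List A) : Prop :=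
  T.Terminal z ∧ ∀ z', T.Terminal z' → T.pref z z'

/-- A sight function for a preference tree `T`: assigns to each history `h ∈ H` a
finite nonempty subset of `H` of histories extending `h`, containing `h`, downward closed (DC) and non-forgetting (NF). -/
structure SightFun (A : Type) (T : PrefTree A) where
  s : List A → Set (List A)
  subset_H : ∀ h ∈ T.H, s h ⊆ T.H
  mem_extends : ∀ h ∈ T.H, ∀ h' ∈ s h, h <+: h'
  s_nonempty : ∀ h ∈ T.H, (s h).Nonempty
  s_finite : ∀ h ∈ T.H, (s h).Finite
  mem_self : ∀ h ∈ T.H, h ∈ s h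
  dc : ∀ h ∈ T.H, ∀ h' h'' : List A, h <+: h' → h' <+: h'' → h'' ∈ s h → h' ∈ s h
  nf : ∀ h ∈ T.H, ∀ h' h'' : List A, h <+: h' → h' <+: h'' → h'' ∈ s h → h'' ∈ s h'

/-- `Z_h`: the set of histories in `s h` having no proper extension in `s h`. -/
def SightFun.Zs {A : Type} {T : PrefTree A} (s : SightFun A T) (h : List A) : Set (List A) :=
  {z | z ∈ s.s h ∧ ∀ z' ∈ s.s h, z <+: z' → z' = z}

/-- A SCBI history of `(T,s)`: a terminal history `h*` such that for every
history `h` and action `a` with `h·a ⊴ h*`, there is a `⪰`-maximal element of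
`Z_h` extending `h·a`. -/
def SCBIHistory {A : Type} (T : PrefTree A) (s : SightFun A T) (hstar : List A) : Prop :=
  T.Terminal hstar ∧ ∀ (h : List A) (a : A), (h ++ [a]) <+: hstar →
    ∃ z ∈ s.Zs h, (h ++ [a]) <+: z ∧ ∀ z' ∈ s.Zs h, T.pref z z'

/-- A history `h*` is sight-reachable if every one-step move `h·a` along it is
visible at `h`, i.e. `h·a ∈ s(h)`. -/
def SightReachable {A : Type} {T : PrefTree A} (s : SightFun A T) (hstar : List A) : Prop :=
  ∀ (h : List A) (a : A), (h ++ [a]) <+: hstar → (h ++ [a]) ∈ s.s h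

/-- If the set of BI histories of `(T,s)` equals its set of SCBI histories,
then every BI history of `(T,s)` is sight-reachable. -/
theorem stmt0 {A : Type} (T : PrefTree A) (s : SightFun A T)
    (heq : ∀ z : List A, T.BIHistory z ↔ SCBIHistory T s z) :
    ∀ z : List A, T.BIHistory z → SightReachable s z := by
  intro z hBI h a hpre
  obtain ⟨hterm, hscbi⟩ := (heq z).mp hBI
  obtain ⟨z₀, hz₀, hext, -⟩ := hscbi h a hpre
  have hH : h ∈ T.H :=
    T.prefix_closed (List.IsPrefix.trans ⟨[a], rfl⟩ hpre) hterm.1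
  exact s.dc h hH (h ++ [a]) z₀ ⟨[a], rfl⟩ hext hz₀.1
end

section
/- Preference–sight consistency does not follow from the equality of BI and SCBI histories: there exists a preference–sight tree (T,s) whose set of BI histories equals its set of SCBI histories but which is not preference–sight consistent. -/
/-- The subjective preference `h1 ⪰_h h2` at `h`: `z1 ⪰ z2`, where `z1` is a
`⪰`-maximal element of `{z ∈ Z_h : h1 ⊴ z}` and `z2` is a `⪰`-maximal element of
`{z ∈ Z_h : h2 ⊴ z}`. -/
def SubjPref {A : Type} (T : PrefTree A) (s : SightFun A T) (h h₁ h₂ : List A) : Prop :=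
  ∃ z₁ z₂ : List A,
    z₁ ∈ s.Zs h ∧ h₁ <+: z₁ ∧ (∀ w ∈ s.Zs h, h₁ <+: w → T.pref z₁ w) ∧
    z₂ ∈ s.Zs h ∧ h₂ <+: z₂ ∧ (∀ w ∈ s.Zs h, h₂ <+: w → T.pref z₂ w) ∧
    T.pref z₁ z₂

/-- `(T,s)` is preference–sight consistent if at every history `h`, for all
`h1, h2 ∈ s(h)`: `h1 ⪰ h2` iff `h1 ⪰_h h2`. -/
def PSConsistent {A : Type} (T : PrefTree A) (s : SightFun A T) : Prop :=
  ∀ h ∈ T.H, ∀ h₁ ∈ s.s h, ∀ h₂ ∈ s.s h, (T.pref h₁ h₂ ↔ SubjPref T s h h₁ h₂)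

namespace Stmt6Aux

def myH : Set (List Bool) := {[], [true], [false]}

def rank : List Bool → ℕ
  | [true] => 2
  | [false] => 1
  | _ => 0

lemma rank_le_two (l : List Bool) : rank l ≤ 2 := by
  unfold rank; split <;> omega

lemma mem_myH (l : List Bool) : l ∈ myH ↔ l = [] ∨ l = [true] ∨ l = [false] := by
  simp [myH]

lemma prefix_single {a : Bool} {h : List Bool} (hp : h <+: [a]) : h = [] ∨ h = [a] := by
  obtain ⟨t, ht⟩ := hp
  cases h with
  | nil => exact Or.inl rfl
  | cons b l =>
    right
    simp at ht
    obtain ⟨hb, hl, -⟩ := ht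
    simp [hb, hl]

def T : PrefTree Bool where
  H := myH
  pref l₁ l₂ := rank l₂ ≤ rank l₁
  H_finite := (Set.finite_singleton _).insert _ |>.insert _
  nil_mem := Or.inl rfl
  prefix_closed := by
    intro h h' hp hmem
    rcases (mem_myH h').mp hmem with rfl | rfl | rfl
    · rw [List.prefix_nil.mp hp]; exact (mem_myH _).mpr (Or.inl rfl)
    · rcases prefix_single hp with rfl | rfl
      · exact (mem_myH _).mpr (Or.inl rfl)
      · exact (mem_myH _).mpr (Or.inr (Or.inl rfl))
    · rcases prefix_single hp with rfl | rfl
      · exact (mem_myH _).mpr (Or.inl rfl)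
      · exact (mem_myH _).mpr (Or.inr (Or.inr rfl))
  pref_refl := by intro h _; exact le_refl _
  pref_trans := by intro h₁ _ h₂ _ h₃ _ a b; exact le_trans b a
  pref_total := by intro h₁ _ h₂ _; exact le_total (rank h₂) (rank h₁)

def s : SightFun Bool T where
  s h := {h' ∈ myH | h <+: h'}
  subset_H := fun _ _ _ hh' => hh'.1
  mem_extends := fun _ _ _ hh' => hh'.2
  s_nonempty := fun h hh => ⟨h, hh, List.prefix_refl h⟩
  s_finite := fun _ _ => ((Set.finite_singleton _).insert _ |>.insert _).subset
    (fun _ hx => hx.1)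
  mem_self := fun h hh => ⟨hh, List.prefix_refl h⟩
  dc := by
    intro h hh h' h'' h1 h2 h3
    exact ⟨T.prefix_closed h2 h3.1, h1⟩
  nf := by
    intro h hh h' h'' h1 h2 h3
    exact ⟨h3.1, h2⟩

lemma true_mem_Zs_nil : [true] ∈ s.Zs [] := by
  constructor
  · exact ⟨(mem_myH _).mpr (Or.inr (Or.inl rfl)), List.nil_prefix⟩
  · rintro z' ⟨hz', -⟩ hp
    rcases (mem_myH z').mp hz' with rfl | rfl | rfl
    · exact absurd (List.prefix_nil.mp hp) (by simp)
    · rfl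
    · rcases prefix_single hp with h | h <;> simp at h

lemma false_not_prefix_true : ¬ ([false] <+: [true]) := by
  intro hp
  rcases prefix_single hp with h | h <;> simp at h

lemma terminal_cases {z : List Bool} (hz : T.Terminal z) : z = [true] ∨ z = [false] := by
  rcases (mem_myH z).mp hz.1 with rfl | rfl | rfl
  · exact absurd ((mem_myH [true]).mpr (Or.inr (Or.inl rfl))) (hz.2 true)
  · exact Or.inl rfl
  · exact Or.inr rfl

lemma terminal_true : T.Terminal [true] := by
  refine ⟨(mem_myH _).mpr (Or.inr (Or.inl rfl)), fun a hmem => ?_⟩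
  rcases (mem_myH _).mp hmem with h | h | h <;> simp at h

end Stmt6Aux

/-- Preference–sight consistency does not follow from BI = SCBI: there is a
P-S tree whose set of BI histories equals its set of SCBI histories but which
is not preference–sight consistent. -/
theorem stmt6 :
    ∃ (A : Type) (T : PrefTree A) (s : SightFun A T),
      {z : List A | T.BIHistory z} = {z : List A | SCBIHistory T s z} ∧
      ¬ PSConsistent T s := by
  refine ⟨Bool, Stmt6Aux.T, Stmt6Aux.s, ?_, ?_⟩
  · ext z
    simp only [Set.mem_setOf_eq]
    constructor
    · rintro ⟨hterm, hBI⟩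
      rcases Stmt6Aux.terminal_cases hterm with rfl | rfl
      · refine ⟨Stmt6Aux.terminal_true, ?_⟩
        intro h a hp
        have hha : h ++ [a] = [true] := by
          rcases Stmt6Aux.prefix_single hp with h' | h' <;> simp_all
        obtain rfl : h = [] := by
          cases h with
          | nil => rfl
          | cons b l => simp at hha
        refine ⟨[true], Stmt6Aux.true_mem_Zs_nil, by rw [List.nil_append] at hha ⊢; rw [hha], ?_⟩
        intro z' _
        exact Stmt6Aux.rank_le_two z'
      · -- [false] is not a BI history: [true] is terminal and strictly better
        exfalso
        have := hBI [true] Stmt6Aux.terminal_true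
        simp [Stmt6Aux.T, Stmt6Aux.rank] at this
    · rintro ⟨hterm, hscbi⟩
      rcases Stmt6Aux.terminal_cases hterm with rfl | rfl
      · refine ⟨Stmt6Aux.terminal_true, fun z' hz' => Stmt6Aux.rank_le_two z'⟩
      · -- [false] is not a SCBI history
        exfalso
        obtain ⟨z, hzZs, hzp, hzmax⟩ := hscbi [] false (by simp)
        have hzH := hzZs.1.1
        have : z = [false] := by
          rcases (Stmt6Aux.mem_myH z).mp hzH with rfl | rfl | rfl
          · exact absurd (List.prefix_nil.mp hzp) (by simp)
          · exact absurd hzp Stmt6Aux.false_not_prefix_true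
          · rfl
        subst this
        have := hzmax [true] Stmt6Aux.true_mem_Zs_nil
        simp [Stmt6Aux.T, Stmt6Aux.rank] at this
  · intro hcons
    have hnil : ([] : List Bool) ∈ Stmt6Aux.T.H := Stmt6Aux.T.nil_mem
    have h1 : ([] : List Bool) ∈ Stmt6Aux.s.s [] := Stmt6Aux.s.mem_self [] hnil
    have h2 : [true] ∈ Stmt6Aux.s.s [] :=
      ⟨(Stmt6Aux.mem_myH _).mpr (Or.inr (Or.inl rfl)), List.nil_prefix⟩
    have hiff := hcons [] hnil [] h1 [true] h2
    have hsubj : SubjPref Stmt6Aux.T Stmt6Aux.s [] [] [true] := by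
      refine ⟨[true], [true], Stmt6Aux.true_mem_Zs_nil, List.nil_prefix,
        fun w _ _ => Stmt6Aux.rank_le_two w, Stmt6Aux.true_mem_Zs_nil,
        List.prefix_refl _, fun w _ _ => Stmt6Aux.rank_le_two w, le_refl _⟩
    have := hiff.mpr hsubj
    simp [Stmt6Aux.T, Stmt6Aux.rank] at this
end

section
/- For classical backward induction, the first move along a BI history can be strictly dispreferred to another available first move (with respect to the objective preference on intermediate histories): there exist a preference tree T = (H, ⪰), a BI history z*, and actions a, a' at the root such that the one-element history ⟨a⟩ is a prefix of z*, ⟨a'⟩ ∈ H, and ⟨a'⟩ ≻ ⟨a⟩. -/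
/-- Rank function on histories for the counterexample. -/
def myRank : List Bool → ℕ
  | [true] => 1
  | [false, false] => 2
  | _ => 0

lemma myRank_le_two : ∀ l, myRank l ≤ 2 := by
  intro l
  unfold myRank
  split <;> omega

/-- The counterexample tree. -/
def myTree : PrefTree Bool where
  H := {l | l = [] ∨ l = [true] ∨ l = [false] ∨ l = [false, false]}
  pref h₁ h₂ := myRank h₂ ≤ myRank h₁
  H_finite := Set.Finite.ofFinset {[], [true], [false], [false, false]} (by
    intro l; simp [Set.mem_setOf_eq])
  nil_mem := Or.inl rfl
  prefix_closed := by
    intro h h' hpre hmem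
    simp only [Set.mem_setOf_eq] at hmem ⊢
    obtain ⟨t, ht⟩ := hpre
    rcases hmem with rfl | rfl | rfl | rfl <;>
      rcases h with _ | ⟨a, _ | ⟨b, _ | _⟩⟩ <;>
      rcases t with _ | ⟨c, _ | _⟩ <;>
      simp_all
  pref_refl := fun _ _ => le_refl _
  pref_trans := fun _ _ _ _ _ _ h1 h2 => le_trans h2 h1
  pref_total := fun _ _ _ _ => le_total _ _

/-- For classical backward induction, the first move along a BI history can be
strictly dispreferred to another available first move: there are a preference
tree `T`, a BI history `z*` and actions `a, a'` at the root with `⟨a⟩ ⊴ z*`,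
`⟨a'⟩ ∈ H` and `⟨a'⟩ ≻ ⟨a⟩`. -/
theorem stmt13 :
    ∃ (A : Type) (T : PrefTree A) (zstar : List A) (a a' : A),
      T.BIHistory zstar ∧ [a] <+: zstar ∧ [a'] ∈ T.H ∧
      T.pref [a'] [a] ∧ ¬ T.pref [a] [a'] := by
  refine ⟨Bool, myTree, [false, false], false, true, ⟨⟨?_, ?_⟩, ?_⟩, ?_, ?_, ?_, ?_⟩
  · exact Or.inr (Or.inr (Or.inr rfl))
  · intro a hmem
    rcases hmem with h | h | h | h <;> simp at h
  · intro z' hz'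
    show myRank z' ≤ myRank [false, false]
    simpa [myRank] using myRank_le_two z'
  · exact ⟨[false], rfl⟩
  · exact Or.inr (Or.inl rfl)
  · simp [myTree, myRank]
  · simp [myTree, myRank]
end

section
/- The SCBI path is not globally optimal: there exist a preference–sight tree (T,s), a SCBI history z of (T,s), and a terminal history z' ∈ Z such that z' ≻ z. -/
abbrev Hfin : Finset (List Bool) := {[], [false], [true], [true,true]}

def rk : List Bool → ℕ
  | [true, true] => 2
  | [false] => 1
  | _ => 0

lemma pre1 {x : Bool} {h : List Bool} (hp : h <+: [x]) : h = [] ∨ h = [x] := by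
  rcases hp with ⟨t, ht⟩
  rcases h with _ | ⟨a, _ | ⟨b, r⟩⟩ <;> simp_all

lemma pre2 {h : List Bool} (hp : h <+: [true, true]) :
    h = [] ∨ h = [true] ∨ h = [true, true] := by
  rcases hp with ⟨t, ht⟩
  rcases h with _ | ⟨a, _ | ⟨b, _ | ⟨c, r⟩⟩⟩ <;> simp_all

def myT : PrefTree Bool where
  H := ↑Hfin
  pref := fun h₁ h₂ => rk h₂ ≤ rk h₁
  H_finite := Hfin.finite_toSet
  nil_mem := by simp
  prefix_closed := by
    intro h h' hp hm
    simp only [Finset.coe_insert, Set.mem_insert_iff, Finset.coe_singleton,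
      Set.mem_singleton_iff, Hfin] at hm ⊢
    rcases hm with rfl | rfl | rfl | rfl
    · left; exact List.prefix_nil.mp hp
    · rcases pre1 hp with rfl | rfl <;> tauto
    · rcases pre1 hp with rfl | rfl <;> tauto
    · rcases pre2 hp with rfl | rfl | rfl <;> tauto
  pref_refl := fun _ _ => le_refl _
  pref_trans := fun _ _ _ _ _ _ h₁ h₂ => le_trans h₂ h₁
  pref_total := fun _ _ _ _ => le_total _ _

def sfun (h : List Bool) : Set (List Bool) :=
  if h = [] then ↑({[], [false], [true]} : Finset (List Bool)) else {h}

lemma sfun_nil : sfun [] = ↑({[], [false], [true]} : Finset (List Bool)) := rfl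

lemma sfun_ne {h : List Bool} (h0 : h ≠ []) : sfun h = {h} := if_neg h0

def myS : SightFun Bool myT where
  s := sfun
  subset_H := by
    intro h hh h' hm
    by_cases h0 : h = []
    · subst h0; rw [sfun_nil] at hm
      simp only [Finset.coe_insert, Set.mem_insert_iff, Finset.coe_singleton,
        Set.mem_singleton_iff] at hm
      rcases hm with rfl | rfl | rfl <;> simp [myT, Hfin]
    · rw [sfun_ne h0] at hm
      rcases hm; exact hh
  mem_extends := by
    intro h hh h' hm
    by_cases h0 : h = []
    · subst h0; exact List.nil_prefix
    · rw [sfun_ne h0] at hm; rcases hm; exact List.prefix_refl _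
  s_nonempty := by
    intro h hh
    by_cases h0 : h = []
    · exact ⟨[], by simp [h0, sfun_nil]⟩
    · exact ⟨h, by simp [sfun_ne h0]⟩
  s_finite := by
    intro h hh
    by_cases h0 : h = []
    · rw [h0, sfun_nil]; exact Finset.finite_toSet _
    · rw [sfun_ne h0]; exact Set.finite_singleton h
  mem_self := by
    intro h hh
    by_cases h0 : h = []
    · subst h0; simp [sfun_nil]
    · simp [sfun_ne h0]
  dc := by
    intro h hh h' h'' h1 h2 hm
    by_cases h0 : h = []
    · subst h0; rw [sfun_nil] at hm ⊢
      simp only [Finset.coe_insert, Set.mem_insert_iff, Finset.coe_singleton,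
        Set.mem_singleton_iff] at hm ⊢
      rcases hm with rfl | rfl | rfl
      · left; exact List.prefix_nil.mp h2
      · rcases pre1 h2 with rfl | rfl <;> tauto
      · rcases pre1 h2 with rfl | rfl <;> tauto
    · rw [sfun_ne h0] at hm ⊢
      rcases hm
      have : h' = h := h2.eq_of_length (le_antisymm h2.length_le h1.length_le)
      simp [this]
  nf := by
    intro h hh h' h'' h1 h2 hm
    by_cases h0 : h = []
    · subst h0; rw [sfun_nil] at hm
      by_cases h0' : h' = []
      · rwa [h0', sfun_nil]
      · rw [sfun_ne h0']
        simp only [Finset.coe_insert, Set.mem_insert_iff, Finset.coe_singleton,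
          Set.mem_singleton_iff] at hm
        rcases hm with rfl | rfl | rfl
        · exact absurd (List.prefix_nil.mp h2) h0'
        · rcases pre1 h2 with rfl | rfl
          · exact absurd rfl h0'
          · rfl
        · rcases pre1 h2 with rfl | rfl
          · exact absurd rfl h0'
          · rfl
    · rw [sfun_ne h0] at hm
      rcases hm
      have hh' : h' = h := h2.eq_of_length (le_antisymm h2.length_le h1.length_le)
      subst hh'
      rw [sfun_ne h0]; rfl

/-- The SCBI path is not globally optimal: there are a P-S tree `(T,s)`, a SCBI
history `z` of `(T,s)` and a terminal history `z' ∈ Z` with `z' ≻ z`. -/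
theorem stmt15 :
    ∃ (A : Type) (T : PrefTree A) (s : SightFun A T) (z z' : List A),
      SCBIHistory T s z ∧ T.Terminal z' ∧
      T.pref z' z ∧ ¬ T.pref z z' := by
  refine ⟨Bool, myT, myS, [false], [true, true], ⟨⟨?_, ?_⟩, ?_⟩, ⟨?_, ?_⟩, ?_, ?_⟩
  · simp [myT, Hfin]
  · intro a; cases a <;> simp [myT, Hfin]
  · intro h a hp
    have hfa : h ++ [a] = [false] := by
      rcases pre1 hp with h' | h'
      · exact absurd h' (by simp)
      · exact h'
    have hnil : h = [] ∧ a = false := by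
      rcases h with _ | ⟨b, _ | ⟨c, r⟩⟩ <;> simp_all
    obtain ⟨rfl, rfl⟩ := hnil
    have hZ : [false] ∈ myS.Zs [] := by
      constructor
      · show [false] ∈ sfun []
        simp [sfun_nil]
      · intro z' hz' hpz
        rw [show myS.s [] = sfun [] from rfl, sfun_nil] at hz'
        simp only [Finset.coe_insert, Set.mem_insert_iff, Finset.coe_singleton,
          Set.mem_singleton_iff] at hz'
        rcases hz' with rfl | rfl | rfl
        · exact absurd (List.prefix_nil.mp hpz) (by simp)
        · rfl
        · rcases hpz with ⟨t, ht⟩; simp_all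
    refine ⟨[false], hZ, by simp, ?_⟩
    intro z' hz'
    have := hz'.1
    rw [show myS.s [] = sfun [] from rfl, sfun_nil] at this
    simp only [Finset.coe_insert, Set.mem_insert_iff, Finset.coe_singleton,
      Set.mem_singleton_iff] at this
    show rk z' ≤ rk [false]
    rcases this with rfl | rfl | rfl <;> simp [rk]
  · simp [myT, Hfin]
  · intro a; cases a <;> simp [myT, Hfin]
  · show rk [false] ≤ rk [true, true]; simp [rk]
  · show ¬ rk [true, true] ≤ rk [false]; simp [rk]
end
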